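/- Let (X,p) be a 0-complete partial metric space and let A_1, …, A_k be nonempty sequentially closed subsets of X with X = A_1 ∪ … ∪ A_k. Suppose T : X → X satisfies (1) T(A_i) ⊆ A_{i+1} for 1 ≤ i ≤ k (where A_{k+1} = A_1), and (2) there exists α ∈ (0,1) such that p(Tx,Ty) ≤ α·p(x,y) for all x ∈ A_i and y ∈ A_{i+1}, 1 ≤ i ≤ k. Then T has a unique fixed point, and this fixed point lies in the intersection A_1 ∩ … ∩ A_k (in particular this intersection is nonempty). -/

import Mathlib

open Filter Topology

/-- A partial metric on a type `X`. -/
structure IsPartialMetric {X : Type*} (p : X → X → ℝ) : Prop where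
  nonneg : ∀ x y, 0 ≤ p x y
  symm : ∀ x y, p x y = p y x
  eq_of : ∀ x y, p x x = p x y → p x y = p y y → x = y
  self_le : ∀ x y, p x x ≤ p x y
  triangle : ∀ x y z, p x z + p y y ≤ p x y + p y z

/-- A sequence `x` converges to `a` in the partial metric `p`:
`lim_{n→∞} p(a, x n) = p(a,a)`. -/
def PConverges {X : Type*} (p : X → X → ℝ) (x : ℕ → X) (a : X) : Prop :=
  Tendsto (fun n => p a (x n)) atTop (𝓝 (p a a))

/-- A sequence is `0`-Cauchy: `lim_{m,n→∞} p(x n, x m) = 0`. -/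
def PZeroCauchy {X : Type*} (p : X → X → ℝ) (x : ℕ → X) : Prop :=
  Tendsto (fun mn : ℕ × ℕ => p (x mn.1) (x mn.2)) atTop (𝓝 0)

/-- `(X,p)` is `0`-complete. -/
def PZeroComplete {X : Type*} (p : X → X → ℝ) : Prop :=
  ∀ x : ℕ → X, PZeroCauchy p x → ∃ a, PConverges p x a ∧ p a a = 0

/-- A set is sequentially closed with respect to `p`-convergence. -/
def SeqClosed {X : Type*} (p : X → X → ℝ) (A : Set X) : Prop :=
  ∀ (x : ℕ → X) (a : X), (∀ n, x n ∈ A) → PConverges p x a → a ∈ A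

/-- A sequence is Cauchy in `(X,p)`: the double limit `lim_{m,n→∞} p(x n, x m)`
exists (finite). -/
def PCauchy {X : Type*} (p : X → X → ℝ) (x : ℕ → X) : Prop :=
  ∃ L : ℝ, Tendsto (fun mn : ℕ × ℕ => p (x mn.1) (x mn.2)) atTop (𝓝 L)

/-- `(X,p)` is complete: every Cauchy sequence converges to some `a` with
`p(a,a) = lim_{m,n→∞} p(x n, x m)`. -/
def PComplete {X : Type*} (p : X → X → ℝ) : Prop :=
  ∀ x : ℕ → X, PCauchy p x → ∃ a, PConverges p x a ∧
    Tendsto (fun mn : ℕ × ℕ => p (x mn.1) (x mn.2)) atTop (𝓝 (p a a))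

/-- Continuity of `T : X → X` with respect to the open `p`-balls. -/
def PMContinuous {X : Type*} (p : X → X → ℝ) (T : X → X) : Prop :=
  ∀ x₀ : X, ∀ ε > (0:ℝ), ∃ δ > (0:ℝ), ∀ y,
    p x₀ y < p x₀ x₀ + δ → p (T x₀) (T y) < p (T x₀) (T x₀) + ε

/-- A set `A` is `0`-compact: every sequence in `A` has a subsequence converging
to some `a ∈ A` with `lim_{n→∞} p(x (k n), a) = p(a,a) = 0`. -/
def PZeroCompact {X : Type*} (p : X → X → ℝ) (A : Set X) : Prop :=
  ∀ x : ℕ → X, (∀ n, x n ∈ A) → ∃ (k : ℕ → ℕ) (a : X), StrictMono k ∧ a ∈ A ∧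
    Tendsto (fun n => p (x (k n)) a) atTop (𝓝 (p a a)) ∧ p a a = 0

open Fin.NatCast

/-- cyclical Banach contraction principle for `k` sets. -/
theorem cyclic_contraction_k_sets {X : Type*} (p : X → X → ℝ)
    (hp : IsPartialMetric p) (hcomp : PZeroComplete p)
    (k : ℕ) [NeZero k] (A : Fin k → Set X)
    (hne : ∀ i, (A i).Nonempty) (hcl : ∀ i, SeqClosed p (A i))
    (hX : (⋃ i, A i) = Set.univ)
    (T : X → X) (hT : ∀ i : Fin k, ∀ x ∈ A i, T x ∈ A (i + 1))
    (α : ℝ) (hα : α ∈ Set.Ioo (0:ℝ) 1)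
    (hcontr : ∀ i : Fin k, ∀ x ∈ A i, ∀ y ∈ A (i + 1), p (T x) (T y) ≤ α * p x y) :
    ∃ z, T z = z ∧ (∀ i, z ∈ A i) ∧ ∀ w, T w = w → w = z := by
  obtain ⟨hα0, hα1⟩ := hα
  have hk1 : 1 ≤ k := Nat.one_le_iff_ne_zero.mpr (NeZero.ne k)
  obtain ⟨x0, hx0⟩ := hne 0
  set x : ℕ → X := fun n => T^[n] x0 with hxdef
  have hxsucc : ∀ n, x (n+1) = T (x n) := fun n => Function.iterate_succ_apply' T n x0
  have hmem : ∀ n : ℕ, x n ∈ A (n : Fin k) := by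
    intro n; induction n with
    | zero => simpa [hxdef] using hx0
    | succ n ih =>
      rw [hxsucc]
      have h2 := hT (n : Fin k) _ ih
      have hcast : ((n+1 : ℕ) : Fin k) = (n : Fin k) + 1 := by push_cast; ring
      rw [hcast]; exact h2
  set d0 := p (x 0) (x 1) with hd0
  have hd0nn : 0 ≤ d0 := hp.nonneg _ _
  have hd : ∀ n, p (x n) (x (n+1)) ≤ α^n * d0 := by
    intro n; induction n with
    | zero => simp [hd0]
    | succ n ih =>
      have h1 : x (n+1) ∈ A ((n : Fin k) + 1) := by
        have := hmem (n+1)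
        have hcast : ((n+1 : ℕ) : Fin k) = (n : Fin k) + 1 := by push_cast; ring
        rwa [hcast] at this
      have h2 := hcontr (n : Fin k) (x n) (hmem n) (x (n+1)) h1
      rw [← hxsucc n, ← hxsucc (n+1)] at h2
      calc p (x (n+1)) (x (n+2)) ≤ α * p (x n) (x (n+1)) := h2
        _ ≤ α * (α^n * d0) := by nlinarith
        _ = α^(n+1) * d0 := by ring
  set C : ℝ := d0 / (1 - α) with hCdef
  have hCnn : 0 ≤ C := div_nonneg hd0nn (by linarith)
  have h1α : (1:ℝ) - α ≠ 0 := ne_of_gt (by linarith)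
  have hd0C : d0 + α * C = C := by rw [hCdef]; field_simp [hCdef, h1α]; ring
  have hd0leC : d0 ≤ C := by nlinarith
  have hkey : ∀ m l, p (x m) (x (m + l)) ≤ α^m * C := by
    intro m l
    induction l generalizing m with
    | zero =>
      have h1 := hp.self_le (x m) (x (m+1))
      have h2 := hd m
      have h3 : α^m * d0 ≤ α^m * C := by
        have : (0:ℝ) ≤ α^m := pow_nonneg (le_of_lt hα0) m
        nlinarith
      simpa using h1.trans (h2.trans h3)
    | succ l ih =>
      have htri := hp.triangle (x m) (x (m+1)) (x ((m+1) + l))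
      have hnn := hp.nonneg (x (m+1)) (x (m+1))
      have h1 := hd m
      have h2 := ih (m+1)
      have harr : m + (l+1) = (m+1) + l := by ring
      rw [harr]
      have hpow : (0:ℝ) ≤ α^m := pow_nonneg (le_of_lt hα0) m
      have : α^(m+1) = α * α^m := by ring
      nlinarith [h2, htri, hnn, h1]
  have hbound : ∀ m n : ℕ, p (x m) (x n) ≤ α^(min m n) * C := by
    intro m n
    rcases le_total m n with h | h
    · obtain ⟨l, rfl⟩ := Nat.exists_eq_add_of_le h
      rw [min_eq_left h]; exact hkey m l
    · obtain ⟨l, rfl⟩ := Nat.exists_eq_add_of_le h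
      rw [min_eq_right h, hp.symm]; exact hkey n l
  have hzc : PZeroCauchy p x := by
    have hmin : Tendsto (fun mn : ℕ × ℕ => min mn.1 mn.2) atTop atTop := by
      apply Filter.tendsto_atTop.mpr; intro b
      filter_upwards [Filter.eventually_ge_atTop ((b, b) : ℕ × ℕ)] with mn h
      exact le_min h.1 h.2
    have hlim : Tendsto (fun mn : ℕ × ℕ => α^(min mn.1 mn.2) * C) atTop (𝓝 0) := by
      have := ((tendsto_pow_atTop_nhds_zero_of_lt_one (le_of_lt hα0) hα1).comp hmin).mul_const C
      simpa using this
    exact tendsto_of_tendsto_of_tendsto_of_le_of_le tendsto_const_nhds hlim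
      (fun mn => hp.nonneg _ _) (fun mn => hbound mn.1 mn.2)
  obtain ⟨a, hconv, haa⟩ := hcomp x hzc
  have hpa0 : Tendsto (fun n => p a (x n)) atTop (𝓝 0) := haa ▸ hconv
  have hA : ∀ i, a ∈ A i := by
    intro i
    apply hcl i (fun m => x (i.val + m*k)) a
    · intro m
      have h1 := hmem (i.val + m*k)
      have hcast : ((i.val + m*k : ℕ) : Fin k) = i := by
        push_cast [Fin.natCast_self, Fin.cast_val_eq_self]
        simp [Nat.cast_mul, Fin.natCast_self]
      rwa [hcast] at h1
    · have htend : Tendsto (fun m : ℕ => i.val + m*k) atTop atTop := by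
        apply tendsto_atTop_mono (fun m => ?_) tendsto_id
        calc (id m : ℕ) = m * 1 := by simp
          _ ≤ m * k := Nat.mul_le_mul_left m hk1
          _ ≤ i.val + m * k := Nat.le_add_left _ _
      exact hconv.comp htend
  have hfix : T a = a := by
    have hle : ∀ n, p (T a) a ≤ α * p a (x n) + p a (x (n+1)) := by
      intro n
      have hi : x n ∈ A (((n:Fin k) - 1) + 1) := by
        rw [sub_add_cancel]; exact hmem n
      have h1 : p (T a) (x (n+1)) ≤ α * p a (x n) := by
        rw [hxsucc]
        exact hcontr ((n:Fin k)-1) a (hA _) (x n) hi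
      have h2 := hp.triangle (T a) (x (n+1)) a
      have h3 := hp.nonneg (x (n+1)) (x (n+1))
      have h4 : p (x (n+1)) a = p a (x (n+1)) := hp.symm _ _
      linarith
    have hTa : p (T a) a ≤ 0 := by
      have hlim : Tendsto (fun n => α * p a (x n) + p a (x (n+1))) atTop (𝓝 0) := by
        have := (hpa0.const_mul α).add (hpa0.comp (tendsto_add_atTop_nat 1))
        simpa using this
      exact ge_of_tendsto hlim (Filter.Eventually.of_forall hle)
    have hTa0 : p (T a) a = 0 := le_antisymm hTa (hp.nonneg _ _)
    have h1 : p (T a) (T a) = 0 :=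
      le_antisymm (hTa0 ▸ hp.self_le (T a) a) (hp.nonneg _ _)
    exact hp.eq_of (T a) a (by rw [h1, hTa0]) (by rw [hTa0, haa])
  refine ⟨a, hfix, hA, ?_⟩
  intro w hw
  obtain ⟨j, hj⟩ : ∃ j, w ∈ A j := by
    have : w ∈ ⋃ i, A i := hX ▸ Set.mem_univ w
    simpa using this
  have hwall : ∀ n : ℕ, w ∈ A (j + n) := by
    intro n; induction n with
    | zero => simpa using hj
    | succ n ih =>
      have h2 := hT (j + n) w ih
      rw [hw] at h2
      have hcast : j + ((n+1 : ℕ) : Fin k) = (j + n) + 1 := by simp [Nat.cast_succ, add_assoc]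
      rwa [hcast]
  have hwA : ∀ i, w ∈ A i := by
    intro i
    have h2 := hwall (i - j).val
    rwa [Fin.cast_val_eq_self, add_comm, sub_add_cancel] at h2
  have hcw : p a w ≤ α * p a w := by
    have h2 := hcontr 0 a (hA 0) w (hwA (0+1))
    rwa [hfix, hw] at h2
  have hpaw : p a w = 0 := by
    have := hp.nonneg a w
    nlinarith
  have hww : p w w = 0 := by
    have h1 := hp.self_le w a
    have h2 : p w a = 0 := by rw [hp.symm]; exact hpaw
    have := hp.nonneg w w
    linarith
  exact hp.eq_of w a (by rw [hww, hp.symm, hpaw]) (by rw [hp.symm, hpaw, haa])
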